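/- arXiv:2406.00558 — 2 statements merged into one kernel-verified Lean document; each statement's English description precedes it below -/
import Mathlib

section
/- Let n ≥ 2 and let D be a closed, s-convex, proper subset of the round n-sphere Sⁿ with nonempty interior (this is the case X = Sⁿ of Proposition: the totally geodesic 2-spheres of curvature 1 in Sⁿ are exactly the great 2-spheres Sⁿ ∩ V for 3-dimensional linear subspaces V). Then for every 3-dimensional linear subspace V of EuclideanSpace ℝ (Fin (n+1)), the intersection D ∩ V is contained in an open hemisphere of the great 2-sphere Sⁿ ∩ V: there exists z ∈ Sⁿ ∩ V such that ⟪z, x⟫_ℝ < 0 for all x ∈ D ∩ V. -/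
notation "⟪" x ", " y "⟫_ℝ" => @inner ℝ _ _ x y

/-- The intrinsic (angular) distance on the unit sphere in `EuclideanSpace ℝ (Fin (n+1))`. -/
noncomputable def sphDist {n : ℕ} (x y : EuclideanSpace ℝ (Fin (n + 1))) : ℝ :=
  Real.arccos ⟪x, y⟫_ℝ

/-- `γ` is a minimizing geodesic segment from `x` to `y` in the round unit `n`-sphere. -/
def IsMinGeodesic {n : ℕ} (x y : EuclideanSpace ℝ (Fin (n + 1)))
    (γ : ℝ → EuclideanSpace ℝ (Fin (n + 1))) : Prop :=
  (∀ t ∈ Set.Icc (0 : ℝ) (sphDist x y),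
      γ t ∈ Metric.sphere (0 : EuclideanSpace ℝ (Fin (n + 1))) 1) ∧
  γ 0 = x ∧ γ (sphDist x y) = y ∧
  ∀ s ∈ Set.Icc (0 : ℝ) (sphDist x y), ∀ t ∈ Set.Icc (0 : ℝ) (sphDist x y),
    sphDist (γ s) (γ t) = |s - t|

/-- `D` is s-convex: every minimizing geodesic segment joining two points of `D` lies in `D`. -/
def SConvex {n : ℕ} (D : Set (EuclideanSpace ℝ (Fin (n + 1)))) : Prop :=
  ∀ x ∈ D, ∀ y ∈ D, ∀ γ : ℝ → EuclideanSpace ℝ (Fin (n + 1)),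
    IsMinGeodesic x y γ → ∀ t ∈ Set.Icc (0 : ℝ) (sphDist x y), γ t ∈ D

lemma frame_inner {n : ℕ} (x u : EuclideanSpace ℝ (Fin (n+1))) (hx : ‖x‖ = 1) (hu : ‖u‖ = 1)
    (hxu : ⟪x, u⟫_ℝ = 0) (s t : ℝ) :
    ⟪Real.cos s • x + Real.sin s • u, Real.cos t • x + Real.sin t • u⟫_ℝ = Real.cos (s - t) := by
  have hxx : ⟪x, x⟫_ℝ = 1 := by rw [real_inner_self_eq_norm_sq, hx]; norm_num
  have huu : ⟪u, u⟫_ℝ = 1 := by rw [real_inner_self_eq_norm_sq, hu]; norm_num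
  have hux : ⟪u, x⟫_ℝ = 0 := by rw [real_inner_comm]; exact hxu
  rw [inner_add_left, inner_add_right, inner_add_right, real_inner_smul_left,
    real_inner_smul_left, real_inner_smul_left, real_inner_smul_left,
    real_inner_smul_right, real_inner_smul_right, real_inner_smul_right, real_inner_smul_right,
    hxx, huu, hxu, hux, Real.cos_sub]
  ring

lemma frame_norm {n : ℕ} (x u : EuclideanSpace ℝ (Fin (n+1))) (hx : ‖x‖ = 1) (hu : ‖u‖ = 1)
    (hxu : ⟪x, u⟫_ℝ = 0) (t : ℝ) :
    ‖Real.cos t • x + Real.sin t • u‖ = 1 := by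
  have h := frame_inner x u hx hu hxu t t
  simp only [sub_self, Real.cos_zero] at h
  rw [real_inner_self_eq_norm_sq] at h
  nlinarith [norm_nonneg (Real.cos t • x + Real.sin t • u)]

/-- Master lemma: points on the geodesic arc from `x` to `cos d • x + sin d • u` lie in `D`. -/
lemma master {n : ℕ} {D : Set (EuclideanSpace ℝ (Fin (n + 1)))}
    (hconv : SConvex D) {x u : EuclideanSpace ℝ (Fin (n+1))}
    (hx : ‖x‖ = 1) (hu : ‖u‖ = 1) (hxu : ⟪x, u⟫_ℝ = 0)
    (hxD : x ∈ D) {d : ℝ} (hd0 : 0 ≤ d) (hdπ : d ≤ Real.pi)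
    (hyD : Real.cos d • x + Real.sin d • u ∈ D)
    {t : ℝ} (ht0 : 0 ≤ t) (htd : t ≤ d) :
    Real.cos t • x + Real.sin t • u ∈ D := by
  set γ : ℝ → EuclideanSpace ℝ (Fin (n+1)) := fun s => Real.cos s • x + Real.sin s • u with hγ
  set y := Real.cos d • x + Real.sin d • u with hy
  have hsd : sphDist x y = d := by
    have h0 : γ 0 = x := by simp [hγ]
    have : ⟪x, y⟫_ℝ = Real.cos d := by
      have := frame_inner x u hx hu hxu 0 d
      simpa [zero_sub, Real.cos_neg] using this
    rw [sphDist, this, Real.arccos_cos hd0 hdπ]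
  have hgeo : IsMinGeodesic x y γ := by
    refine ⟨fun s _ => ?_, by simp [hγ], by rw [hsd], fun s hs t' ht' => ?_⟩
    · simpa using frame_norm x u hx hu hxu s
    · rw [hsd] at hs ht'
      have habs : |s - t'| ≤ Real.pi := by
        rw [abs_le]; constructor <;> nlinarith [hs.1, hs.2, ht'.1, ht'.2]
      have habs0 : (0:ℝ) ≤ |s - t'| := abs_nonneg _
      rw [sphDist, hγ]
      simp only []
      rw [frame_inner x u hx hu hxu s t', ← Real.cos_abs, Real.arccos_cos habs0 habs]
  have := hconv x hxD y hyD γ hgeo t ⟨ht0, by rw [hsd]; exact htd⟩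
  exact this

/-- `D` (s-convex, proper, contained in the sphere) contains no antipodal pair. -/
lemma no_antipodes {n : ℕ} {D : Set (EuclideanSpace ℝ (Fin (n + 1)))}
    (hsub : D ⊆ Metric.sphere 0 1) (hproper : D ≠ Metric.sphere 0 1)
    (hconv : SConvex D) {x : EuclideanSpace ℝ (Fin (n+1))} (hxD : x ∈ D) : -x ∉ D := by
  intro hnxD
  have hx : ‖x‖ = 1 := by simpa using hsub hxD
  apply hproper
  apply Set.Subset.antisymm hsub
  intro z hz
  have hz1 : ‖z‖ = 1 := by simpa using hz
  by_cases hzx : z = x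
  · rwa [hzx]
  by_cases hznx : z = -x
  · rwa [hznx]
  set c : ℝ := ⟪x, z⟫_ℝ with hc
  set w := z - c • x with hw
  have hxx : ⟪x, x⟫_ℝ = 1 := by rw [real_inner_self_eq_norm_sq, hx]; norm_num
  have hzz : ⟪z, z⟫_ℝ = 1 := by rw [real_inner_self_eq_norm_sq, hz1]; norm_num
  have hzx' : ⟪z, x⟫_ℝ = c := by rw [real_inner_comm]
  have hww : ⟪w, w⟫_ℝ = 1 - c^2 := by
    rw [hw, inner_sub_left, inner_sub_right, inner_sub_right, real_inner_smul_left,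
      real_inner_smul_left, real_inner_smul_right, real_inner_smul_right, hxx, hzz, hzx']
    ring
  have hwne : w ≠ 0 := by
    intro h0
    have : z = c • x := by rwa [hw, sub_eq_zero] at h0
    have : |c| = 1 := by
      have h2 := congrArg norm this
      rw [hz1, norm_smul, hx, Real.norm_eq_abs, mul_one] at h2
      exact h2.symm
    rcases abs_eq (by norm_num : (0:ℝ) ≤ 1) |>.mp this with h1 | h1
    · exact hzx (by rw [‹z = c • x›, h1, one_smul])
    · exact hznx (by rw [‹z = c • x›, h1, neg_smul, one_smul])
  have hwnorm : (0:ℝ) < ‖w‖ := norm_pos_iff.mpr hwne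
  have hwn2 : ‖w‖^2 = 1 - c^2 := by rw [← real_inner_self_eq_norm_sq]; exact hww
  set u := ‖w‖⁻¹ • w with hu'
  have hu : ‖u‖ = 1 := by
    rw [hu', norm_smul, norm_inv, norm_norm, inv_mul_cancel₀ (ne_of_gt hwnorm)]
  have hxw : ⟪x, w⟫_ℝ = 0 := by
    rw [hw, inner_sub_right, real_inner_smul_right, hxx, ← hc]; ring
  have hxu : ⟪x, u⟫_ℝ = 0 := by rw [hu', real_inner_smul_right, hxw, mul_zero]
  have hc1 : |c| ≤ 1 := by
    have := abs_real_inner_le_norm x z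
    rwa [hx, hz1, one_mul] at this
  have hcm : -1 ≤ c := by cases abs_le.mp hc1; assumption
  have hcM : c ≤ 1 := (abs_le.mp hc1).2
  -- the antipode is γ π
  have hyπ : Real.cos Real.pi • x + Real.sin Real.pi • u = -x := by
    rw [Real.cos_pi, Real.sin_pi, zero_smul, add_zero, neg_one_smul]
  have := master hconv hx hu hxu hxD (le_of_lt Real.pi_pos) (le_refl _)
    (by rw [hyπ]; exact hnxD)
    (Real.arccos_nonneg c) (Real.arccos_le_pi c)
  -- show γ (arccos c) = z
  have hcos : Real.cos (Real.arccos c) = c := Real.cos_arccos hcm hcM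
  have hsin : Real.sin (Real.arccos c) = ‖w‖ := by
    rw [Real.sin_arccos]
    rw [show (1 : ℝ) - c^2 = ‖w‖^2 from hwn2.symm, Real.sqrt_sq (norm_nonneg w)]
  rw [hcos, hsin] at this
  have : (c • x + ‖w‖ • u) ∈ D := this
  have hzz' : c • x + ‖w‖ • u = z := by
    rw [hu', smul_smul, mul_inv_cancel₀ (ne_of_gt hwnorm), one_smul, hw]
    abel
  rwa [hzz'] at this

set_option maxHeartbeats 1000000 in
/-- Positive combinations of points of `D` normalize back into `D`. -/
lemma combo {n : ℕ} {D : Set (EuclideanSpace ℝ (Fin (n + 1)))}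
    (hsub : D ⊆ Metric.sphere 0 1) (hproper : D ≠ Metric.sphere 0 1)
    (hconv : SConvex D) {x y : EuclideanSpace ℝ (Fin (n+1))}
    (hxD : x ∈ D) (hyD : y ∈ D) {p q : ℝ} (hp : 0 < p) (hq : 0 < q) :
    p • x + q • y ≠ 0 ∧ ‖p • x + q • y‖⁻¹ • (p • x + q • y) ∈ D := by
  have hx : ‖x‖ = 1 := by simpa using hsub hxD
  have hy : ‖y‖ = 1 := by simpa using hsub hyD
  have hxx : ⟪x, x⟫_ℝ = 1 := by rw [real_inner_self_eq_norm_sq, hx]; norm_num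
  have hyy : ⟪y, y⟫_ℝ = 1 := by rw [real_inner_self_eq_norm_sq, hy]; norm_num
  by_cases hxyeq : x = y
  · subst hxyeq
    have h1 : p • x + q • x = (p + q) • x := by rw [add_smul]
    have hpq : 0 < p + q := by linarith
    have hne : p • x + q • x ≠ 0 := by
      rw [h1]
      intro h
      have := congrArg norm h
      rw [norm_smul, hx, Real.norm_eq_abs, abs_of_pos hpq, mul_one, norm_zero] at this
      linarith
    refine ⟨hne, ?_⟩
    have hn : ‖p • x + q • x‖ = p + q := by
      rw [h1, norm_smul, hx, Real.norm_eq_abs, abs_of_pos hpq, mul_one]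
    rw [hn, h1, smul_smul, inv_mul_cancel₀ (ne_of_gt hpq), one_smul]
    exact hxD
  set c : ℝ := ⟪x, y⟫_ℝ with hc
  have hyx : ⟪y, x⟫_ℝ = c := by rw [real_inner_comm]
  have hc1 : |c| ≤ 1 := by
    have := abs_real_inner_le_norm x y
    rwa [hx, hy, one_mul] at this
  have hcM : c < 1 := by
    rcases lt_or_eq_of_le (abs_le.mp hc1).2 with h | h
    · exact h
    · exfalso
      apply hxyeq
      have : ‖x - y‖^2 = 0 := by
        rw [← real_inner_self_eq_norm_sq, inner_sub_left, inner_sub_right, inner_sub_right,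
          hxx, hyy, hyx, ← hc, h]
        ring
      have := pow_eq_zero_iff (n := 2) (by norm_num) |>.mp this
      rw [norm_eq_zero, sub_eq_zero] at this
      exact this
  have hcm : -1 < c := by
    rcases lt_or_eq_of_le (abs_le.mp hc1).1 with h | h
    · exact h
    · exfalso
      have hyx2 : y = -x := by
        have : ‖x + y‖^2 = 0 := by
          rw [← real_inner_self_eq_norm_sq, inner_add_left, inner_add_right, inner_add_right,
            hxx, hyy, hyx, ← hc, ← h]
          ring
        have := pow_eq_zero_iff (n := 2) (by norm_num) |>.mp this
        rw [norm_eq_zero, add_eq_zero_iff_eq_neg] at this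
        rw [this]
        simp
      exact no_antipodes hsub hproper hconv hxD (hyx2 ▸ hyD)
  have hc2 : 0 < 1 - c^2 := by nlinarith
  set v := y - c • x with hv
  have hvv : ⟪v, v⟫_ℝ = 1 - c^2 := by
    rw [hv, inner_sub_left, inner_sub_right, inner_sub_right, real_inner_smul_left,
      real_inner_smul_left, real_inner_smul_right, real_inner_smul_right, hxx, hyy, hyx, ← hc]
    ring
  have hvn2 : ‖v‖^2 = 1 - c^2 := by rw [← real_inner_self_eq_norm_sq]; exact hvv
  have hvpos : (0:ℝ) < ‖v‖ := by
    rw [norm_pos_iff]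
    intro h0
    rw [h0] at hvn2
    simp at hvn2
    nlinarith
  set u := ‖v‖⁻¹ • v with hu'
  have hu : ‖u‖ = 1 := by
    rw [hu', norm_smul, norm_inv, norm_norm, inv_mul_cancel₀ (ne_of_gt hvpos)]
  have hxv : ⟪x, v⟫_ℝ = 0 := by
    rw [hv, inner_sub_right, real_inner_smul_right, hxx, ← hc]; ring
  have hxu : ⟪x, u⟫_ℝ = 0 := by rw [hu', real_inner_smul_right, hxv, mul_zero]
  set d := Real.arccos c with hd
  have hd0 : 0 < d := Real.arccos_pos.mpr hcM
  have hdπ : d ≤ Real.pi := Real.arccos_le_pi c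
  have hcosd : Real.cos d = c := Real.cos_arccos (le_of_lt hcm) (le_of_lt hcM)
  have hsind : Real.sin d = ‖v‖ := by
    rw [hd, Real.sin_arccos, show (1:ℝ) - c^2 = ‖v‖^2 from hvn2.symm,
      Real.sqrt_sq (norm_nonneg v)]
  have hyform : Real.cos d • x + Real.sin d • u = y := by
    rw [hcosd, hsind, hu', smul_smul, mul_inv_cancel₀ (ne_of_gt hvpos), one_smul, hv]
    abel
  set w := p • x + q • y with hw
  have hiw : ⟪x, w⟫_ℝ = p + q * c := by
    rw [hw, inner_add_right, real_inner_smul_right, real_inner_smul_right, hxx, ← hc]; ring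
  have hww : ⟪w, w⟫_ℝ = p^2 + q^2 + 2*p*q*c := by
    rw [hw, inner_add_left, inner_add_right, inner_add_right, real_inner_smul_left,
      real_inner_smul_left, real_inner_smul_left, real_inner_smul_left, real_inner_smul_right,
      real_inner_smul_right, real_inner_smul_right, real_inner_smul_right, hxx, hyy, hyx, ← hc]
    ring
  have hwn2 : ‖w‖^2 = p^2 + q^2 + 2*p*q*c := by rw [← real_inner_self_eq_norm_sq]; exact hww
  have hwpos : (0:ℝ) < ‖w‖ := by
    have h2 : (0:ℝ) < p^2 + q^2 + 2*p*q*c := by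
      nlinarith [sq_nonneg (p - q), mul_pos (mul_pos hp hq) (show (0:ℝ) < 1 + c by linarith)]
    rcases (norm_nonneg w).lt_or_eq with h | h
    · exact h
    · exfalso; rw [← h] at hwn2; nlinarith
  have hwne : w ≠ 0 := norm_pos_iff.mp hwpos
  refine ⟨hwne, ?_⟩
  set N := ‖w‖ with hN
  have hsq : (p + q*c)^2 ≤ N^2 := by nlinarith [sq_nonneg q, hvn2]
  have habs : |p + q*c| ≤ N := by
    have := Real.sqrt_le_sqrt hsq
    rwa [Real.sqrt_sq_eq_abs, Real.sqrt_sq (norm_nonneg w)] at this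
  have hargm : -1 ≤ (p + q*c)/N := by
    rw [le_div_iff₀ hwpos]
    nlinarith [abs_le.mp habs]
  have hargM : (p + q*c)/N ≤ 1 := by
    rw [div_le_one hwpos]
    exact (abs_le.mp habs).2
  set t := Real.arccos ((p + q*c)/N) with htdef
  have hcost : Real.cos t = (p + q*c)/N := Real.cos_arccos hargm hargM
  have hsint : Real.sin t = q * ‖v‖ / N := by
    rw [htdef, Real.sin_arccos]
    have : 1 - ((p + q*c)/N)^2 = (q * ‖v‖ / N)^2 := by
      field_simp
      nlinarith [hvn2]
    rw [this, Real.sqrt_sq (by positivity)]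
  have ht0 : 0 ≤ t := Real.arccos_nonneg _
  have htle : t ≤ d := by
    by_contra hlt
    push_neg at hlt
    have htπ : t ≤ Real.pi := Real.arccos_le_pi _
    have hsin : Real.sin (d - t) = ‖v‖ * p / N := by
      rw [Real.sin_sub, hcost, hsint, hcosd, hsind]
      field_simp
      ring
    have hpos : 0 < Real.sin (d - t) := by rw [hsin]; positivity
    have hnp : Real.sin (d - t) ≤ 0 := by
      apply Real.sin_nonpos_of_nonpos_of_neg_pi_le
      · linarith
      · linarith
    linarith
  have hmem := master hconv hx hu hxu hxD (le_of_lt hd0) hdπ (by rw [hyform]; exact hyD) ht0 htle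
  have hform : Real.cos t • x + Real.sin t • u = N⁻¹ • w := by
    rw [hcost, hsint, hu', hw, smul_smul]
    have hyv : y = c • x + v := by rw [hv]; abel
    rw [hyv]
    match_scalars
    · field_simp; ring
    · field_simp
  rwa [hform] at hmem

/-- The inner dual cone of a set. -/
def Set.innerDualCone {H : Type*} [NormedAddCommGroup H] [InnerProductSpace ℝ H] (s : Set H) :
    ConvexCone ℝ H where
  carrier := {y | ∀ x ∈ s, 0 ≤ ⟪x, y⟫_ℝ}
  smul_mem' c hc y hy x hx := by rw [real_inner_smul_right]; exact mul_nonneg hc.le (hy x hx)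
  add_mem' u hu v hv x hx := by rw [inner_add_right]; exact add_nonneg (hu x hx) (hv x hx)

theorem ConvexCone.innerDualCone_of_innerDualCone_eq_self {H : Type*} [NormedAddCommGroup H]
    [InnerProductSpace ℝ H] [CompleteSpace H] (K : ConvexCone ℝ H)
    (ne : (K : Set H).Nonempty) (hc : IsClosed (K : Set H)) :
    ((K : Set H).innerDualCone : Set H).innerDualCone = K := by
  ext x; constructor
  · intro hx
    by_contra hxK
    obtain ⟨k, hk⟩ := ne
    have h0 : (0 : H) ∈ K := by
      have ht : Filter.Tendsto (fun m : ℕ => (1 / ((m : ℝ) + 1)) • k) Filter.atTop (nhds 0) := by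
        simpa using (show Filter.Tendsto (fun m : ℕ => 1 / ((m : ℝ) + 1)) Filter.atTop (nhds 0)
          from tendsto_one_div_add_atTop_nhds_zero_nat).smul_const k
      exact hc.mem_of_tendsto ht
        (Filter.Eventually.of_forall fun m => K.smul_mem (by positivity) hk)
    let C : ProperCone ℝ H := { toSubmodule := K.toPointedCone h0, isClosed' := hc }
    obtain ⟨y, hy, hxy⟩ := C.hyperplane_separation' (x₀ := x) hxK
    have := hx y (fun z hz => hy z hz)
    rw [real_inner_comm] at this
    linarith
  · intro hx y hy
    rw [real_inner_comm]; exact hy x hx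

section Cone
variable {n : ℕ} {D : Set (EuclideanSpace ℝ (Fin (n + 1)))}

/-- The cone over `D`. -/
def coneOver (D : Set (EuclideanSpace ℝ (Fin (n + 1)))) : Set (EuclideanSpace ℝ (Fin (n+1))) :=
  {0} ∪ {w | ∃ r : ℝ, 0 < r ∧ ∃ x ∈ D, w = r • x}

lemma subset_coneOver : D ⊆ coneOver D := fun x hx =>
  Or.inr ⟨1, one_pos, x, hx, (one_smul ℝ x).symm⟩

lemma coneOver_normalize (hsub : D ⊆ Metric.sphere 0 1) {w : EuclideanSpace ℝ (Fin (n+1))}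
    (hw : w ∈ coneOver D) (hwne : w ≠ 0) : 0 < ‖w‖ ∧ ‖w‖⁻¹ • w ∈ D := by
  rcases hw with h0 | ⟨r, hr, x, hxD, rfl⟩
  · exact absurd h0 hwne
  · have hx : ‖x‖ = 1 := by simpa using hsub hxD
    have hn : ‖r • x‖ = r := by
      rw [norm_smul, hx, Real.norm_eq_abs, abs_of_pos hr, mul_one]
    refine ⟨by rw [hn]; exact hr, ?_⟩
    rw [hn, smul_smul, inv_mul_cancel₀ (ne_of_gt hr), one_smul]
    exact hxD

lemma coneOver_isClosed (hsub : D ⊆ Metric.sphere 0 1) (hclosed : IsClosed D) :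
    IsClosed (coneOver D) := by
  apply IsSeqClosed.isClosed
  intro f a hf hfa
  by_cases ha : a = 0
  · exact Or.inl (by simp [ha])
  have hna : ‖a‖ ≠ 0 := norm_ne_zero_iff.mpr ha
  have hev : ∀ᶠ k in Filter.atTop, f k ≠ 0 := by
    have : {w : EuclideanSpace ℝ (Fin (n+1)) | w ≠ 0} ∈ nhds a :=
      (isOpen_compl_singleton).mem_nhds ha
    exact hfa.eventually this
  have hcont : Filter.Tendsto (fun w : EuclideanSpace ℝ (Fin (n+1)) => ‖w‖⁻¹ • w)
      (nhds a) (nhds (‖a‖⁻¹ • a)) := by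
    apply ContinuousAt.tendsto
    exact (continuous_norm.continuousAt.inv₀ hna).smul continuousAt_id
  have hgt : Filter.Tendsto (fun k => ‖f k‖⁻¹ • f k) Filter.atTop (nhds (‖a‖⁻¹ • a)) :=
    hcont.comp hfa
  have hevD : ∀ᶠ k in Filter.atTop, ‖f k‖⁻¹ • f k ∈ D := by
    filter_upwards [hev] with k hk
    exact (coneOver_normalize hsub (hf k) hk).2
  have hmem : ‖a‖⁻¹ • a ∈ D := hclosed.mem_of_tendsto hgt hevD
  right
  exact ⟨‖a‖, norm_pos_iff.mpr ha, _, hmem,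
    by rw [smul_smul, mul_inv_cancel₀ hna, one_smul]⟩

/-- The cone over `D` as a convex cone. -/
noncomputable def coneOverCC (hsub : D ⊆ Metric.sphere 0 1) (hproper : D ≠ Metric.sphere 0 1)
    (hconv : SConvex D) : ConvexCone ℝ (EuclideanSpace ℝ (Fin (n+1))) where
  carrier := coneOver D
  smul_mem' := by
    rintro c hc w (h0 | ⟨r, hr, x, hxD, rfl⟩)
    · rw [Set.mem_singleton_iff] at h0
      exact Or.inl (by simp [h0])
    · exact Or.inr ⟨c * r, mul_pos hc hr, x, hxD, (smul_smul c r x)⟩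
  add_mem' := by
    rintro w₁ (h0 | ⟨r₁, hr₁, x₁, hx₁, rfl⟩) w₂ hw₂
    · rw [Set.mem_singleton_iff] at h0
      rw [h0, zero_add]; exact hw₂
    rcases hw₂ with h0 | ⟨r₂, hr₂, x₂, hx₂, rfl⟩
    · rw [Set.mem_singleton_iff] at h0
      rw [h0, add_zero]; exact Or.inr ⟨r₁, hr₁, x₁, hx₁, rfl⟩
    obtain ⟨hne, hmem⟩ := combo hsub hproper hconv hx₁ hx₂ hr₁ hr₂
    refine Or.inr ⟨‖r₁ • x₁ + r₂ • x₂‖, norm_pos_iff.mpr hne, _, hmem, ?_⟩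
    rw [smul_smul, mul_inv_cancel₀ (norm_ne_zero_iff.mpr hne), one_smul]

/-- The key functional: strictly positive on `D`. -/
lemma exists_pos_functional (hsub : D ⊆ Metric.sphere 0 1) (hclosed : IsClosed D)
    (hproper : D ≠ Metric.sphere 0 1) (hconv : SConvex D) :
    ∃ y, ∀ x ∈ D, 0 < ⟪x, y⟫_ℝ := by
  set K := coneOverCC hsub hproper hconv with hK
  have hKset : (K : Set (EuclideanSpace ℝ (Fin (n+1)))) = coneOver D := rfl
  have hKne : (K : Set (EuclideanSpace ℝ (Fin (n+1)))).Nonempty := ⟨0, Or.inl rfl⟩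
  have hKcl : IsClosed (K : Set (EuclideanSpace ℝ (Fin (n+1)))) :=
    coneOver_isClosed hsub hclosed
  have hdd := ConvexCone.innerDualCone_of_innerDualCone_eq_self K hKne hKcl
  by_contra hcon
  push_neg at hcon
  -- FIP argument
  have hDcomp : IsCompact D := by
    apply Metric.isCompact_of_isClosed_isBounded hclosed
    exact (Metric.isBounded_sphere).subset hsub
  set dual := ((K : Set (EuclideanSpace ℝ (Fin (n+1)))).innerDualCone :
    Set (EuclideanSpace ℝ (Fin (n+1)))) with hdual
  have hdual0 : (0 : EuclideanSpace ℝ (Fin (n+1))) ∈ dual := by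
    intro x _; rw [inner_zero_right]
  haveI : Nonempty dual := ⟨⟨0, hdual0⟩⟩
  set t : dual → Set (EuclideanSpace ℝ (Fin (n+1))) :=
    fun y => {x ∈ D | ⟪x, (y : EuclideanSpace ℝ (Fin (n+1)))⟫_ℝ ≤ 0} with ht
  have htn : ∀ y, (t y).Nonempty := by
    intro y
    obtain ⟨x, hxD, hx⟩ := hcon y
    exact ⟨x, hxD, hx⟩
  have htcl : ∀ y, IsClosed (t y) := by
    intro y
    apply hclosed.inter
    have hcont : Continuous fun x : EuclideanSpace ℝ (Fin (n+1)) =>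
        ⟪x, (y : EuclideanSpace ℝ (Fin (n+1)))⟫_ℝ :=
      Continuous.inner continuous_id continuous_const
    exact isClosed_le hcont continuous_const
  have htc : ∀ y, IsCompact (t y) := fun y => hDcomp.of_isClosed_subset (htcl y)
    (fun x hx => hx.1)
  have htd : Directed (· ⊇ ·) t := by
    intro y₁ y₂
    refine ⟨⟨(y₁ : EuclideanSpace ℝ (Fin (n+1))) + y₂,
      (Set.innerDualCone _).add_mem y₁.2 y₂.2⟩, ?_, ?_⟩ <;>
    · rintro x ⟨hxD, hxle⟩
      have h1 : 0 ≤ ⟪x, (y₁ : EuclideanSpace ℝ (Fin (n+1)))⟫_ℝ := y₁.2 x (subset_coneOver hxD)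
      have h2 : 0 ≤ ⟪x, (y₂ : EuclideanSpace ℝ (Fin (n+1)))⟫_ℝ := y₂.2 x (subset_coneOver hxD)
      rw [inner_add_right] at hxle
      exact ⟨hxD, by linarith⟩
  obtain ⟨x₀, hx₀⟩ := IsCompact.nonempty_iInter_of_directed_nonempty_isCompact_isClosed
    t htd htn htc htcl
  have hx₀D : x₀ ∈ D := by
    obtain ⟨y⟩ := ‹Nonempty dual›
    exact (Set.mem_iInter.mp hx₀ y).1
  have hzero : ∀ y ∈ dual, ⟪x₀, y⟫_ℝ = 0 := by
    intro y hy
    have hle : ⟪x₀, y⟫_ℝ ≤ 0 := (Set.mem_iInter.mp hx₀ ⟨y, hy⟩).2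
    have hge : 0 ≤ ⟪x₀, y⟫_ℝ := hy x₀ (subset_coneOver hx₀D)
    linarith
  have hneg : -x₀ ∈ (K : Set (EuclideanSpace ℝ (Fin (n+1)))) := by
    rw [← hdd]
    intro y hy
    rw [inner_neg_right, real_inner_comm, hzero y hy, neg_zero]
  have hx₀n : ‖x₀‖ = 1 := by simpa using hsub hx₀D
  have hnegne : -x₀ ≠ 0 := by
    intro h
    rw [neg_eq_zero] at h
    rw [h, norm_zero] at hx₀n
    norm_num at hx₀n
  have := (coneOver_normalize hsub hneg hnegne).2
  rw [norm_neg, hx₀n, inv_one, one_smul] at this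
  exact no_antipodes hsub hproper hconv hx₀D this

end Cone

/-- A closed s-convex proper subset of the round `n`-sphere with nonempty interior meets every
great 2-sphere (the intersection of the sphere with a 3-dimensional linear subspace) in a set
contained in an open hemisphere of that great 2-sphere. -/
theorem stmt_5 (n : ℕ) (hn : 2 ≤ n)
    (D : Set (EuclideanSpace ℝ (Fin (n + 1))))
    (hsub : D ⊆ Metric.sphere 0 1)
    (hclosed : IsClosed D)
    (hproper : D ≠ Metric.sphere 0 1)
    (hconv : SConvex D)
    (hint : (interior ((↑) ⁻¹' D :
      Set (Metric.sphere (0 : EuclideanSpace ℝ (Fin (n + 1))) 1))).Nonempty)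
    (V : Submodule ℝ (EuclideanSpace ℝ (Fin (n + 1))))
    (hV : Module.finrank ℝ V = 3) :
    ∃ z, z ∈ Metric.sphere (0 : EuclideanSpace ℝ (Fin (n + 1))) 1 ∧ z ∈ V ∧
      ∀ x ∈ D, x ∈ V → ⟪z, x⟫_ℝ < 0 := by

  rcases Set.eq_empty_or_nonempty (D ∩ (V : Set (EuclideanSpace ℝ (Fin (n+1))))) with hSe | hSne
  · have hVne : V ≠ ⊥ := by
      intro h
      rw [h] at hV
      simp [finrank_bot] at hV
    obtain ⟨v, hvV, hv0⟩ := Submodule.exists_mem_ne_zero_of_ne_bot hVne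
    refine ⟨‖v‖⁻¹ • v, ?_, V.smul_mem _ hvV, ?_⟩
    · rw [mem_sphere_zero_iff_norm, norm_smul, norm_inv, norm_norm,
        inv_mul_cancel₀ (norm_ne_zero_iff.mpr hv0)]
    · intro x hxD hxV
      exact absurd (Set.mem_inter hxD hxV) (by rw [hSe]; simp)
  · obtain ⟨y, hy⟩ := exists_pos_functional hsub hclosed hproper hconv
    set z₀ : EuclideanSpace ℝ (Fin (n+1)) := -((V.orthogonalProjectionOnto y) :
      EuclideanSpace ℝ (Fin (n+1))) with hz₀
    have hz₀V : z₀ ∈ V := V.neg_mem (V.orthogonalProjectionOnto y).2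
    have hips : ∀ x ∈ D, x ∈ V → ⟪z₀, x⟫_ℝ < 0 := by
      intro x hxD hxV
      have horth : ⟪y - ((V.orthogonalProjectionOnto y) : EuclideanSpace ℝ (Fin (n+1))), x⟫_ℝ = 0 :=
        Submodule.starProjection_inner_eq_zero y x hxV
      rw [inner_sub_left] at horth
      have hyx : 0 < ⟪x, y⟫_ℝ := hy x hxD
      rw [real_inner_comm] at hyx
      rw [hz₀, inner_neg_left]
      linarith
    obtain ⟨x₀, hx₀D, hx₀V⟩ := hSne
    have hz₀ne : z₀ ≠ 0 := by
      intro h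
      have := hips x₀ hx₀D hx₀V
      rw [h, inner_zero_left] at this
      exact lt_irrefl 0 this
    refine ⟨‖z₀‖⁻¹ • z₀, ?_, V.smul_mem _ hz₀V, ?_⟩
    · rw [mem_sphere_zero_iff_norm, norm_smul, norm_inv, norm_norm,
        inv_mul_cancel₀ (norm_ne_zero_iff.mpr hz₀ne)]
    · intro x hxD hxV
      rw [real_inner_smul_left]
      exact mul_neg_of_pos_of_neg (inv_pos.mpr (norm_pos_iff.mpr hz₀ne)) (hips x hxD hxV)
end

section
/- Let n ≥ 2 and let C be an open, w-convex, proper subset of the round n-sphere Sⁿ that is maximal among open w-convex proper subsets (i.e., every open w-convex proper subset of Sⁿ containing C equals C). Then for every 3-dimensional linear subspace V of EuclideanSpace ℝ (Fin (n+1)), the intersection C ∩ V is contained in an open hemisphere of the great 2-sphere Sⁿ ∩ V: there exists z ∈ Sⁿ ∩ V such that ⟪z, x⟫_ℝ < 0 for all x ∈ C ∩ V. (This is the case X = Sⁿ of the Proposition; the totally geodesic 2-spheres of curvature 1 in Sⁿ are exactly the great 2-spheres.) -/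
/-- `D` is w-convex: any two points of `D` are joined by some minimizing geodesic inside `D`. -/
def WConvex {n : ℕ} (D : Set (EuclideanSpace ℝ (Fin (n + 1)))) : Prop :=
  ∀ x ∈ D, ∀ y ∈ D, ∃ γ : ℝ → EuclideanSpace ℝ (Fin (n + 1)),
    IsMinGeodesic x y γ ∧ ∀ t ∈ Set.Icc (0 : ℝ) (sphDist x y), γ t ∈ D

/-- `C` is open in the subspace topology of the round unit `n`-sphere. -/
def IsOpenInSphere {n : ℕ} (C : Set (EuclideanSpace ℝ (Fin (n + 1)))) : Prop :=
  IsOpen ((↑) ⁻¹' C : Set (Metric.sphere (0 : EuclideanSpace ℝ (Fin (n + 1))) 1))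

section helpers

variable {n : ℕ}

local notation "E" => EuclideanSpace ℝ (Fin (n + 1))

lemma norm_eq_one_of_sq {r : ℝ} (h0 : 0 ≤ r) (h : r ^ 2 = 1) : r = 1 := by
  have h2 : (r - 1) * (r + 1) = 0 := by ring_nf; linarith
  rcases mul_eq_zero.1 h2 with h3 | h3
  · linarith
  · linarith

lemma inner_abs_le {x y : E} (hx : ‖x‖ = 1) (hy : ‖y‖ = 1) :
    -1 ≤ ⟪x, y⟫_ℝ ∧ ⟪x, y⟫_ℝ ≤ 1 := by
  have h := abs_real_inner_le_norm x y
  rw [hx, hy] at h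
  constructor <;> [linarith [neg_abs_le (⟪x, y⟫_ℝ)]; linarith [le_abs_self (⟪x, y⟫_ℝ)]]

lemma eq_of_inner_one {x y : E} (hx : ‖x‖ = 1) (hy : ‖y‖ = 1) (h : ⟪x, y⟫_ℝ = 1) : x = y := by
  have h2 : ‖x - y‖ ^ 2 = 0 := by rw [norm_sub_sq_real, hx, hy, h]; ring
  have h3 : x - y = 0 := norm_eq_zero.1 (pow_eq_zero_iff (n := 2) (by norm_num) |>.1 h2)
  exact sub_eq_zero.1 h3

lemma neg_of_inner_neg_one {x y : E} (hx : ‖x‖ = 1) (hy : ‖y‖ = 1) (h : ⟪x, y⟫_ℝ = -1) :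
    y = -x := by
  have h2 : ‖x + y‖ ^ 2 = 0 := by rw [norm_add_sq_real, hx, hy, h]; ring
  have h3 : x + y = 0 := norm_eq_zero.1 (pow_eq_zero_iff (n := 2) (by norm_num) |>.1 h2)
  linear_combination (norm := module) h3

lemma sphDist_pos {x y : E} (hx : ‖x‖ = 1) (hy : ‖y‖ = 1) (hne : x ≠ y) : 0 < sphDist x y := by
  refine Real.arccos_pos.2 ?_
  rcases lt_or_eq_of_le (inner_abs_le hx hy).2 with h | h
  · exact h
  · exact absurd (eq_of_inner_one hx hy h) hne

lemma sphDist_lt_pi {x y : E} (hx : ‖x‖ = 1) (hy : ‖y‖ = 1) (hc : -1 < ⟪x, y⟫_ℝ) :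
    sphDist x y < Real.pi := by
  refine lt_of_le_of_ne (Real.arccos_le_pi _) (fun h => ?_)
  have h2 : Real.cos (sphDist x y) = ⟪x, y⟫_ℝ :=
    Real.cos_arccos (inner_abs_le hx hy).1 (inner_abs_le hx hy).2
  rw [h, Real.cos_pi] at h2
  linarith

lemma sphDist_le_pi (x y : E) : sphDist x y ≤ Real.pi := Real.arccos_le_pi _

/-- Construction of a minimizing geodesic between non-antipodal distinct unit vectors. -/
lemma geo_exists {x y : E} (hx : ‖x‖ = 1) (hy : ‖y‖ = 1) (hc : -1 < ⟪x, y⟫_ℝ)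
    (h1 : ⟪x, y⟫_ℝ < 1) : ∃ γ, IsMinGeodesic x y γ := by
  set c : ℝ := ⟪x, y⟫_ℝ with hcdef
  have hs2 : (0:ℝ) < 1 - c ^ 2 := by nlinarith
  set s : ℝ := Real.sqrt (1 - c ^ 2) with hsdef
  have hs : 0 < s := Real.sqrt_pos.2 hs2
  have hssq : s ^ 2 = 1 - c ^ 2 := Real.sq_sqrt hs2.le
  set u : E := s⁻¹ • (y - c • x) with hudef
  have hxx : ⟪x, x⟫_ℝ = 1 := by rw [real_inner_self_eq_norm_sq, hx]; norm_num
  have hyy : ⟪y, y⟫_ℝ = 1 := by rw [real_inner_self_eq_norm_sq, hy]; norm_num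
  have hxu : ⟪x, u⟫_ℝ = 0 := by
    rw [hudef, real_inner_smul_right, inner_sub_right, real_inner_smul_right, hxx, ← hcdef]
    ring
  have huu : ⟪u, u⟫_ℝ = 1 := by
    have hyx : ⟪y, x⟫_ℝ = c := by rw [real_inner_comm, ← hcdef]
    simp only [hudef, real_inner_smul_left, real_inner_smul_right, inner_sub_left,
      inner_sub_right, hxx, hyy, hyx, ← hcdef]
    field_simp
    nlinarith
  set γ : ℝ → E := fun t => Real.cos t • x + Real.sin t • u with hγdef
  have hux : ⟪u, x⟫_ℝ = 0 := by rw [real_inner_comm]; exact hxu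
  have hinner : ∀ a b : ℝ, ⟪γ a, γ b⟫_ℝ = Real.cos (a - b) := by
    intro a b
    simp only [hγdef, inner_add_left, inner_add_right, real_inner_smul_left,
      real_inner_smul_right, hxx, huu, hxu, hux, Real.cos_sub]
    ring
  have hd : sphDist x y = Real.arccos c := rfl
  have hdpos : 0 ≤ sphDist x y := Real.arccos_nonneg _
  have hdle : sphDist x y ≤ Real.pi := Real.arccos_le_pi _
  have hcos : Real.cos (sphDist x y) = c := Real.cos_arccos (by linarith) (by linarith)
  have hsin : Real.sin (sphDist x y) = s := by rw [hd, Real.sin_arccos]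
  have hsph : ∀ t ∈ Set.Icc (0:ℝ) (sphDist x y), γ t ∈ Metric.sphere (0 : E) 1 := by
    intro t _
    rw [mem_sphere_zero_iff_norm]
    refine norm_eq_one_of_sq (norm_nonneg _) ?_
    rw [← real_inner_self_eq_norm_sq, hinner, sub_self, Real.cos_zero]
  have h0 : γ 0 = x := by simp [hγdef]
  have hdd : γ (sphDist x y) = y := by
    rw [hγdef]
    simp only [hcos, hsin, hudef, smul_smul, mul_inv_cancel₀ hs.ne', one_smul]
    module
  refine ⟨γ, hsph, h0, hdd, ?_⟩
  intro a ha b hb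
  have hab : |a - b| ≤ Real.pi := by
    rw [abs_le]
    constructor <;> [linarith [ha.1, ha.2, hb.1, hb.2]; linarith [ha.1, ha.2, hb.1, hb.2]]
  rw [sphDist, hinner, ← Real.cos_abs, Real.arccos_cos (abs_nonneg _) hab]

lemma geo_const {x : E} (hx : ‖x‖ = 1) : IsMinGeodesic x x (fun _ => x) := by
  have hxx : ⟪x, x⟫_ℝ = 1 := by rw [real_inner_self_eq_norm_sq, hx]; norm_num
  have hd : sphDist x x = 0 := by rw [sphDist, hxx, Real.arccos_one]
  refine ⟨fun t _ => by rwa [mem_sphere_zero_iff_norm], rfl, by rw [hd], ?_⟩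
  intro s hs t ht
  rw [hd] at hs ht
  have hs0 : s = 0 := le_antisymm hs.2 hs.1
  have ht0 : t = 0 := le_antisymm ht.2 ht.1
  rw [hs0, ht0, sphDist, hxx, Real.arccos_one]
  norm_num

/-- Uniqueness: any minimizing geodesic between distinct non-antipodal unit vectors is the slerp. -/
lemma geo_unique {x y : E} {γ : ℝ → E} (hx : ‖x‖ = 1) (hy : ‖y‖ = 1)
    (hc : -1 < ⟪x, y⟫_ℝ) (hne : x ≠ y) (hγ : IsMinGeodesic x y γ) :
    ∀ t ∈ Set.Icc (0 : ℝ) (sphDist x y),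
      γ t = (Real.sin (sphDist x y))⁻¹ •
        (Real.sin (sphDist x y - t) • x + Real.sin t • y) := by
  obtain ⟨hsph, h0, hdd, hdist⟩ := hγ
  set d := sphDist x y with hddef
  have hdpos : 0 < d := sphDist_pos hx hy hne
  have hdlt : d < Real.pi := sphDist_lt_pi hx hy hc
  have hsd : 0 < Real.sin d := Real.sin_pos_of_pos_of_lt_pi hdpos hdlt
  have hcosd : Real.cos d = ⟪x, y⟫_ℝ :=
    Real.cos_arccos (inner_abs_le hx hy).1 (inner_abs_le hx hy).2
  intro t ht
  have h0m : (0:ℝ) ∈ Set.Icc (0:ℝ) d := ⟨le_refl 0, hdpos.le⟩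
  have hdm : d ∈ Set.Icc (0:ℝ) d := ⟨hdpos.le, le_refl d⟩
  have hγt : ‖γ t‖ = 1 := by
    have := hsph t ht; rwa [mem_sphere_zero_iff_norm] at this
  -- inner products with endpoints
  have hxγ : ⟪x, γ t⟫_ℝ = Real.cos t := by
    have h1 : sphDist (γ 0) (γ t) = |0 - t| := hdist 0 h0m t ht
    rw [h0, zero_sub, abs_neg, abs_of_nonneg ht.1] at h1
    have := congrArg Real.cos h1
    rwa [sphDist, Real.cos_arccos (inner_abs_le hx hγt).1 (inner_abs_le hx hγt).2] at this
  have hyγ : ⟪y, γ t⟫_ℝ = Real.cos (d - t) := by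
    have h1 : sphDist (γ d) (γ t) = |d - t| := hdist d hdm t ht
    rw [hdd, abs_of_nonneg (by linarith [ht.2])] at h1
    have := congrArg Real.cos h1
    rwa [sphDist, Real.cos_arccos (inner_abs_le hy hγt).1 (inner_abs_le hy hγt).2] at this
  -- the slerp point
  set w : E := (Real.sin d)⁻¹ • (Real.sin (d - t) • x + Real.sin t • y) with hwdef
  have hxx : ⟪x, x⟫_ℝ = 1 := by rw [real_inner_self_eq_norm_sq, hx]; norm_num
  have hyy : ⟪y, y⟫_ℝ = 1 := by rw [real_inner_self_eq_norm_sq, hy]; norm_num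
  have hyx : ⟪y, x⟫_ℝ = ⟪x, y⟫_ℝ := real_inner_comm x y
  have keygen : ∀ A B : ℝ, Real.sin A ^ 2 + Real.sin B ^ 2
      + 2 * Real.sin A * Real.sin B * Real.cos (A + B) = Real.sin (A + B) ^ 2 := by
    intro A B
    rw [Real.sin_add, Real.cos_add]
    linear_combination (-(Real.sin A ^ 2)) * Real.sin_sq_add_cos_sq B
      + (-(Real.sin B ^ 2)) * Real.sin_sq_add_cos_sq A
  have key : Real.sin (d - t) ^ 2 + Real.sin t ^ 2
      + 2 * Real.sin (d - t) * Real.sin t * Real.cos d = Real.sin d ^ 2 := by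
    have := keygen (d - t) t
    rwa [sub_add_cancel] at this
  have hww : ⟪w, w⟫_ℝ = 1 := by
    simp only [hwdef, real_inner_smul_left, real_inner_smul_right, inner_add_left,
      inner_add_right, hxx, hyy, hyx, ← hcosd]
    field_simp
    nlinarith [key]
  have hγw : ⟪γ t, w⟫_ℝ = 1 := by
    have hγx : ⟪γ t, x⟫_ℝ = Real.cos t := by rw [real_inner_comm]; exact hxγ
    have hγy : ⟪γ t, y⟫_ℝ = Real.cos (d - t) := by rw [real_inner_comm]; exact hyγ
    simp only [hwdef, real_inner_smul_right, inner_add_right, hγx, hγy]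
    have e1 : Real.sin d = Real.sin (d - t) * Real.cos t + Real.cos (d - t) * Real.sin t := by
      rw [← Real.sin_add]
      congr 1
      ring
    field_simp
    linarith [e1]
  have hdiff : ‖γ t - w‖ ^ 2 = 0 := by
    rw [norm_sub_sq_real, hγw, hγt]
    have : ‖w‖ ^ 2 = 1 := by rw [← real_inner_self_eq_norm_sq, hww]
    rw [this]; ring
  have h3 : γ t - w = 0 := norm_eq_zero.1 (pow_eq_zero_iff (n := 2) (by norm_num) |>.1 hdiff)
  exact sub_eq_zero.1 h3

/-- Any minimizing geodesic between points of an open half-space stays in it. -/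
lemma geo_pos {x y : E} {γ : ℝ → E} (hx : ‖x‖ = 1) (hy : ‖y‖ = 1)
    (hc : -1 < ⟪x, y⟫_ℝ) (hne : x ≠ y) (hγ : IsMinGeodesic x y γ) (p : E)
    (hpx : 0 < ⟪p, x⟫_ℝ) (hpy : 0 < ⟪p, y⟫_ℝ) :
    ∀ t ∈ Set.Icc (0 : ℝ) (sphDist x y), 0 < ⟪p, γ t⟫_ℝ := by
  intro t ht
  rw [geo_unique hx hy hc hne hγ t ht]
  set d := sphDist x y with hddef
  have hdpos : 0 < d := sphDist_pos hx hy hne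
  have hdlt : d < Real.pi := sphDist_lt_pi hx hy hc
  have hsd : 0 < Real.sin d := Real.sin_pos_of_pos_of_lt_pi hdpos hdlt
  rw [real_inner_smul_right, inner_add_right, real_inner_smul_right, real_inner_smul_right]
  have hst : 0 ≤ Real.sin t :=
    Real.sin_nonneg_of_nonneg_of_le_pi ht.1 (by linarith [ht.2])
  have hsdt : 0 ≤ Real.sin (d - t) :=
    Real.sin_nonneg_of_nonneg_of_le_pi (by linarith [ht.2]) (by linarith [ht.1])
  have hsum : 0 < Real.sin (d - t) * ⟪p, x⟫_ℝ + Real.sin t * ⟪p, y⟫_ℝ := by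
    rcases eq_or_lt_of_le ht.1 with h1 | h1
    · have : Real.sin (d - t) = Real.sin d := by rw [← h1]; ring_nf
      nlinarith
    · have hstpos : 0 < Real.sin t := Real.sin_pos_of_pos_of_lt_pi h1 (by linarith [ht.2])
      nlinarith
  positivity

end helpers


section hemi

variable {n : ℕ}

local notation "E" => EuclideanSpace ℝ (Fin (n + 1))

lemma inner_gt_neg_one {p x y : E} (hx : ‖x‖ = 1) (hy : ‖y‖ = 1)
    (hpx : 0 < ⟪p, x⟫_ℝ) (hpy : 0 < ⟪p, y⟫_ℝ) : -1 < ⟪x, y⟫_ℝ := by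
  rcases lt_or_eq_of_le (inner_abs_le hx hy).1 with h | h
  · exact h
  · exfalso
    have := neg_of_inner_neg_one hx hy h.symm
    rw [this, inner_neg_right] at hpy
    linarith

lemma hemi_wconvex (p : E) : WConvex (Metric.sphere (0:E) 1 ∩ {v | 0 < ⟪p, v⟫_ℝ}) := by
  rintro x ⟨hxs, hpx⟩ y ⟨hys, hpy⟩
  rw [mem_sphere_zero_iff_norm] at hxs hys
  by_cases hne : x = y
  · subst hne
    exact ⟨fun _ => x, geo_const hxs,
      fun t _ => ⟨mem_sphere_zero_iff_norm.2 hxs, hpx⟩⟩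
  · have hcneg : -1 < ⟪x, y⟫_ℝ := inner_gt_neg_one hxs hys hpx hpy
    have hclt : ⟪x, y⟫_ℝ < 1 := by
      rcases lt_or_eq_of_le (inner_abs_le hxs hys).2 with h | h
      · exact h
      · exact absurd (eq_of_inner_one hxs hys h) hne
    obtain ⟨γ, hγ⟩ := geo_exists hxs hys hcneg hclt
    exact ⟨γ, hγ, fun t ht =>
      ⟨hγ.1 t ht, geo_pos hxs hys hcneg hne hγ p hpx hpy t ht⟩⟩

lemma hemi_open (p : E) : IsOpenInSphere (Metric.sphere (0:E) 1 ∩ {v | 0 < ⟪p, v⟫_ℝ}) := by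
  have heq : ((↑) ⁻¹' (Metric.sphere (0:E) 1 ∩ {v | 0 < ⟪p, v⟫_ℝ}) :
      Set (Metric.sphere (0 : E) 1)) = ((↑) ⁻¹' {v | 0 < ⟪p, v⟫_ℝ}) := by
    ext z
    simp [z.2]
  rw [IsOpenInSphere, heq]
  exact (isOpen_lt continuous_const (continuous_const.inner continuous_id)).preimage
    continuous_subtype_val

lemma hemi_ne (p : E) (hp : ‖p‖ = 1) :
    (Metric.sphere (0:E) 1 ∩ {v | 0 < ⟪p, v⟫_ℝ}) ≠ Metric.sphere 0 1 := by
  intro h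
  have hmem : (-p : E) ∈ Metric.sphere (0:E) 1 := by
    rw [mem_sphere_zero_iff_norm, norm_neg, hp]
  rw [← h] at hmem
  have := hmem.2
  rw [Set.mem_setOf_eq, inner_neg_right, real_inner_self_eq_norm_sq, hp] at this
  norm_num at this

lemma hemi_mem (p : E) (hp : ‖p‖ = 1) :
    p ∈ (Metric.sphere (0:E) 1 ∩ {v | 0 < ⟪p, v⟫_ℝ}) := by
  refine ⟨mem_sphere_zero_iff_norm.2 hp, ?_⟩
  rw [Set.mem_setOf_eq, real_inner_self_eq_norm_sq, hp]
  norm_num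

end hemi

section cone

variable {n : ℕ}

local notation "E" => EuclideanSpace ℝ (Fin (n + 1))

lemma combo_mem {C : Set E} (hsub : C ⊆ Metric.sphere 0 1) (hconv : WConvex C)
    {x y : E} (hxC : x ∈ C) (hyC : y ∈ C) {α β : ℝ} (hα : 0 < α) (hβ : 0 < β) :
    α • x + β • y = 0 ∨ (∃ r : ℝ, 0 < r ∧ ∃ z ∈ C, α • x + β • y = r • z) := by
  have hxs : ‖x‖ = 1 := mem_sphere_zero_iff_norm.1 (hsub hxC)
  have hys : ‖y‖ = 1 := mem_sphere_zero_iff_norm.1 (hsub hyC)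
  have hle := inner_abs_le hxs hys
  rcases eq_or_lt_of_le hle.2 with h1 | h1
  · -- inner = 1 : x = y
    have hxy := eq_of_inner_one hxs hys h1
    right
    exact ⟨α + β, by linarith, x, hxC, by rw [hxy]; module⟩
  rcases eq_or_lt_of_le hle.1 with hm1 | hm1
  · -- inner = -1 : y = -x
    have hxy := neg_of_inner_neg_one hxs hys hm1.symm
    rcases lt_trichotomy α β with h | h | h
    · right
      exact ⟨β - α, by linarith, y, hyC, by rw [hxy]; module⟩
    · left
      rw [hxy, h]; module
    · right
      exact ⟨α - β, by linarith, x, hxC, by rw [hxy]; module⟩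
  · -- generic case
    have hne : x ≠ y := by
      intro h
      rw [h, real_inner_self_eq_norm_sq, hys] at h1
      norm_num at h1
    obtain ⟨γ, hγ, hγC⟩ := hconv x hxC y hyC
    set d := sphDist x y with hddef
    have hdpos : 0 < d := sphDist_pos hxs hys hne
    have hdlt : d < Real.pi := sphDist_lt_pi hxs hys hm1
    have hsd : 0 < Real.sin d := Real.sin_pos_of_pos_of_lt_pi hdpos hdlt
    -- intermediate value theorem
    set f : ℝ → ℝ := fun t => α * Real.sin t - β * Real.sin (d - t) with hfdef
    have hcont : ContinuousOn f (Set.Icc 0 d) := by fun_prop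
    have hiv := intermediate_value_Icc hdpos.le hcont
    have h0mem : (0:ℝ) ∈ Set.Icc (f 0) (f d) := by
      constructor
      · simp only [hfdef, Real.sin_zero, sub_zero, mul_zero, zero_sub]
        nlinarith
      · simp only [hfdef, sub_self, Real.sin_zero, mul_zero, sub_zero]
        nlinarith
    obtain ⟨t, ht, hft⟩ := hiv h0mem
    have heqn : α * Real.sin t = β * Real.sin (d - t) := by
      have : α * Real.sin t - β * Real.sin (d - t) = 0 := hft
      linarith
    have hst : 0 < Real.sin t := by
      rcases eq_or_lt_of_le ht.1 with h | h
      · exfalso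
        rw [← h] at heqn
        simp only [Real.sin_zero, mul_zero, sub_zero] at heqn
        have := heqn.symm
        nlinarith
      · exact Real.sin_pos_of_pos_of_lt_pi h (by linarith [ht.2])
    have hsdt : 0 < Real.sin (d - t) := by nlinarith
    have huniq := geo_unique hxs hys hm1 hne hγ t ht
    have hrew : Real.sin (d - t) • x + Real.sin t • y
        = (Real.sin t / β) • (α • x + β • y) := by
      have hdt : Real.sin (d - t) = (Real.sin t / β) * α := by
        rw [div_mul_eq_mul_div, eq_div_iff hβ.ne']
        linarith
      have hb2 : Real.sin t / β * β = Real.sin t := div_mul_cancel₀ _ hβ.ne'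
      have hexp : (Real.sin t / β) • (α • x + β • y)
          = (Real.sin t / β * α) • x + (Real.sin t / β * β) • y := by module
      rw [hdt, hexp, hb2]
    rw [hrew, smul_smul] at huniq
    set r' : ℝ := (Real.sin d)⁻¹ * (Real.sin t / β) with hr'def
    have hr' : 0 < r' := by positivity
    right
    refine ⟨r'⁻¹, by positivity, γ t, hγC t ht, ?_⟩
    rw [huniq, smul_smul, inv_mul_cancel₀ hr'.ne', one_smul]

lemma cone_smul_mem {C : Set E}
    {v : E} (hv : v ∈ {v : E | v = 0 ∨ ∃ r : ℝ, 0 < r ∧ ∃ z ∈ C, v = r • z})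
    {a : ℝ} (ha : 0 ≤ a) :
    a • v ∈ {v : E | v = 0 ∨ ∃ r : ℝ, 0 < r ∧ ∃ z ∈ C, v = r • z} := by
  rcases hv with hv | ⟨r, hr, z, hz, hvz⟩
  · left; rw [hv, smul_zero]
  rcases eq_or_lt_of_le ha with h | h
  · left; rw [← h, zero_smul]
  · right
    exact ⟨a * r, by positivity, z, hz, by rw [hvz, smul_smul]⟩

lemma cone_convex {C : Set E} (hsub : C ⊆ Metric.sphere 0 1) (hconv : WConvex C) :
    Convex ℝ {v : E | v = 0 ∨ ∃ r : ℝ, 0 < r ∧ ∃ z ∈ C, v = r • z} := by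
  intro a ha b hb pa pb hpa hpb hpab
  rcases ha with ha0 | ⟨r, hr, z, hz, haz⟩
  · rw [ha0, smul_zero, zero_add]
    exact cone_smul_mem hb hpb
  rcases hb with hb0 | ⟨s, hs, w, hw, hbw⟩
  · rw [hb0, smul_zero, add_zero]
    exact cone_smul_mem (Or.inr ⟨r, hr, z, hz, haz⟩) hpa
  rcases eq_or_lt_of_le hpa with h | hpa'
  · rw [← h, zero_smul, zero_add]
    exact cone_smul_mem (Or.inr ⟨s, hs, w, hw, hbw⟩) hpb
  rcases eq_or_lt_of_le hpb with h | hpb'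
  · rw [← h, zero_smul, add_zero]
    exact cone_smul_mem (Or.inr ⟨r, hr, z, hz, haz⟩) hpa
  have : pa • a + pb • b = (pa * r) • z + (pb * s) • w := by
    rw [haz, hbw, smul_smul, smul_smul]
  rw [this]
  rcases combo_mem hsub hconv hz hw (by positivity : (0:ℝ) < pa * r)
      (by positivity : (0:ℝ) < pb * s) with h | ⟨r₀, hr₀, z₀, hz₀, he⟩
  · left; exact h
  · right; exact ⟨r₀, hr₀, z₀, hz₀, he⟩

end cone

section sep

variable {n : ℕ}

local notation "E" => EuclideanSpace ℝ (Fin (n + 1))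

lemma exists_hemi_superset {C : Set E} (hsub : C ⊆ Metric.sphere 0 1)
    (hopen : IsOpenInSphere C) (hconv : WConvex C) (hproper : C ≠ Metric.sphere 0 1)
    (hne : C.Nonempty) :
    ∃ p : E, ‖p‖ = 1 ∧ ∀ x ∈ C, 0 < ⟪p, x⟫_ℝ := by
  obtain ⟨x0, hx0C⟩ := hne
  have hx0s : ‖x0‖ = 1 := mem_sphere_zero_iff_norm.1 (hsub hx0C)
  -- get the ambient open set
  obtain ⟨U, hUopen, hUpre⟩ := isOpen_induced_iff.1 hopen
  have hUC : ∀ v : E, ‖v‖ = 1 → (v ∈ U ↔ v ∈ C) := by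
    intro v hv
    have hvs : v ∈ Metric.sphere (0:E) 1 := mem_sphere_zero_iff_norm.2 hv
    have := Set.ext_iff.1 hUpre ⟨v, hvs⟩
    simpa using this
  set K : Set E := {v : E | v = 0 ∨ ∃ r : ℝ, 0 < r ∧ ∃ z ∈ C, v = r • z} with hKdef
  have hKconv : Convex ℝ K := cone_convex hsub hconv
  have hCK : ∀ x ∈ C, x ∈ K := by
    intro x hx
    right
    exact ⟨1, one_pos, x, hx, (one_smul ℝ x).symm⟩
  -- the cone over C is open away from 0
  set W : Set E := {v : E | v ≠ 0} ∩ (fun v : E => ‖v‖⁻¹ • v) ⁻¹' U with hWdef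
  have hWopen : IsOpen W := by
    have hcont : ContinuousOn (fun v : E => ‖v‖⁻¹ • v) {v : E | v ≠ 0} := by
      refine ContinuousOn.smul (f := fun v : E => ‖v‖⁻¹) ?_ continuousOn_id
      exact (continuous_norm.continuousOn).inv₀ fun v hv => norm_ne_zero_iff.2 hv
    exact hcont.isOpen_inter_preimage isOpen_ne hUopen
  have hWK : W ⊆ K := by
    rintro v ⟨hv0, hvU⟩
    have hv0' : v ≠ 0 := hv0
    have hnorm : ‖(‖v‖⁻¹ • v : E)‖ = 1 := by
      rw [norm_smul, norm_inv, norm_norm, inv_mul_cancel₀ (norm_ne_zero_iff.2 hv0')]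
    have hmemC : (‖v‖⁻¹ • v : E) ∈ C := (hUC _ hnorm).1 hvU
    right
    refine ⟨‖v‖, norm_pos_iff.2 hv0', _, hmemC, ?_⟩
    rw [smul_smul, mul_inv_cancel₀ (norm_ne_zero_iff.2 hv0'), one_smul]
  have hx0W : x0 ∈ W := by
    constructor
    · simp only [Set.mem_setOf_eq]
      intro h
      rw [h, norm_zero] at hx0s
      norm_num at hx0s
    · show (‖x0‖⁻¹ • x0 : E) ∈ U
      rw [hx0s, inv_one, one_smul]
      exact (hUC x0 hx0s).2 hx0C
  have hx0int : x0 ∈ interior K := interior_maximal hWK hWopen hx0W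
  -- 0 is not in the interior of the cone
  have h0ni : (0:E) ∉ interior K := by
    intro h0
    have hK0 : K ∈ nhds (0:E) := mem_interior_iff_mem_nhds.1 h0
    obtain ⟨ε, hε, hball⟩ := Metric.mem_nhds_iff.1 hK0
    have hsphC : Metric.sphere (0:E) 1 ⊆ C := by
      intro u hu
      have hu1 : ‖u‖ = 1 := mem_sphere_zero_iff_norm.1 hu
      have hmem : (ε/2) • u ∈ K := by
        apply hball
        rw [Metric.mem_ball, dist_zero_right, norm_smul, hu1, mul_one, Real.norm_eq_abs,
          abs_of_pos (by linarith)]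
        linarith
      rcases hmem with h | ⟨r, hr, z, hz, hrz⟩
      · exfalso
        have : ((ε/2 : ℝ)) = 0 ∨ u = 0 := smul_eq_zero.1 h
        rcases this with h' | h'
        · linarith
        · rw [h', norm_zero] at hu1; norm_num at hu1
      · have hz1 : ‖z‖ = 1 := mem_sphere_zero_iff_norm.1 (hsub hz)
        have hnorm : ε/2 = r := by
          have := congrArg norm hrz
          rwa [norm_smul, norm_smul, hu1, hz1, mul_one, mul_one, Real.norm_eq_abs,
            Real.norm_eq_abs, abs_of_pos (by linarith : (0:ℝ) < ε/2), abs_of_pos hr] at this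
        have : u = z := by
          have h2 : (ε/2) • u = (ε/2) • z := by rw [hrz, hnorm]
          exact smul_right_injective _ (by linarith : (ε/2:ℝ) ≠ 0) h2
        rw [this]; exact hz
    exact hproper (le_antisymm hsub hsphC)
  -- separation
  obtain ⟨f, hf⟩ := geometric_hahn_banach_open_point (hKconv.interior) isOpen_interior h0ni
  rw [map_zero] at hf
  have hfx0 : f x0 < 0 := hf x0 hx0int
  have hfle : ∀ v ∈ K, f v ≤ 0 := by
    intro v hvK
    by_contra hpos
    push_neg at hpos
    set a : ℝ := f x0
    set b : ℝ := f v
    have hba : 0 < b - a := by simp only [a, b]; linarith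
    set θ : ℝ := b / (b - a) with hθdef
    have hθpos : 0 < θ := by positivity
    have hθle : 1 - θ ≥ 0 := by
      rw [hθdef]
      rw [ge_iff_le, sub_nonneg, div_le_one hba]
      simp only [a, b]; linarith
    have hmem := hKconv.combo_interior_closure_mem_interior hx0int
      (subset_closure hvK) hθpos hθle (by ring)
    have hlt := hf _ hmem
    rw [map_add, map_smul, map_smul, smul_eq_mul, smul_eq_mul] at hlt
    have hzero : θ * f x0 + (1 - θ) * f v = 0 := by
      rw [hθdef]
      field_simp
      ring
    linarith
  -- convert to a vector
  set p0 : E := (InnerProductSpace.toDual ℝ _).symm (-f) with hp0def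
  have hp0app : ∀ x : E, ⟪p0, x⟫_ℝ = -(f x) := by
    intro x
    rw [hp0def, InnerProductSpace.toDual_symm_apply]
    rfl
  have hp0nonneg : ∀ x ∈ C, 0 ≤ ⟪p0, x⟫_ℝ := by
    intro x hx
    rw [hp0app]
    linarith [hfle x (hCK x hx)]
  have hp0x0 : 0 < ⟪p0, x0⟫_ℝ := by rw [hp0app]; linarith
  have hp0ne : p0 ≠ 0 := by
    intro h
    rw [h, inner_zero_left] at hp0x0
    linarith
  have hp0norm : 0 < ‖p0‖ := norm_pos_iff.2 hp0ne
  -- strict positivity on C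
  have hp0pos : ∀ x ∈ C, 0 < ⟪p0, x⟫_ℝ := by
    intro x hxC
    rcases eq_or_lt_of_le (hp0nonneg x hxC) with h0 | h0
    · exfalso
      have hx1 : ‖x‖ = 1 := mem_sphere_zero_iff_norm.1 (hsub hxC)
      set q : E := ‖p0‖⁻¹ • p0 with hqdef
      have hq1 : ‖q‖ = 1 := by
        rw [hqdef, norm_smul, norm_inv, norm_norm, inv_mul_cancel₀ hp0norm.ne']
      have hxq : ⟪x, q⟫_ℝ = 0 := by
        rw [hqdef, real_inner_smul_right, real_inner_comm, ← h0, mul_zero]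
      have hp0q : ⟪p0, q⟫_ℝ = ‖p0‖ := by
        rw [hqdef, real_inner_smul_right, real_inner_self_eq_norm_sq]
        field_simp
      set g : ℝ → E := fun ε => Real.cos ε • x - Real.sin ε • q with hgdef
      have hgnorm : ∀ ε : ℝ, ‖g ε‖ = 1 := by
        intro ε
        refine norm_eq_one_of_sq (norm_nonneg _) ?_
        rw [hgdef]
        simp only
        rw [norm_sub_sq_real, norm_smul, norm_smul, real_inner_smul_left,
          real_inner_smul_right, hxq, hx1, hq1, Real.norm_eq_abs, Real.norm_eq_abs]
        have := Real.sin_sq_add_cos_sq ε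
        rw [mul_one, mul_one, sq_abs, sq_abs]
        nlinarith
      have hg0 : g 0 = x := by
        rw [hgdef]; simp
      have hgcont : Continuous g := by
        rw [hgdef]; fun_prop
      have hgU : ∀ᶠ ε in nhds (0:ℝ), g ε ∈ U := by
        have : Filter.Tendsto g (nhds 0) (nhds x) := by
          rw [← hg0]; exact hgcont.tendsto 0
        exact this.eventually_mem (hUopen.mem_nhds ((hUC x hx1).2 hxC))
      obtain ⟨δ, hδ, hδP⟩ := Metric.eventually_nhds_iff.1 hgU
      set ε : ℝ := min (δ/2) (1/2) with hεdef
      have hε0 : 0 < ε := by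
        apply lt_min <;> linarith
      have hε1 : ε < Real.pi := by
        have := Real.pi_gt_three
        have : ε ≤ 1/2 := min_le_right _ _
        linarith [Real.pi_gt_three]
      have hgεU : g ε ∈ U := by
        apply hδP
        rw [Real.dist_eq, sub_zero, abs_of_pos hε0]
        have : ε ≤ δ/2 := min_le_left _ _
        linarith
      have hgεC : g ε ∈ C := (hUC _ (hgnorm ε)).1 hgεU
      have hcontra := hp0nonneg _ hgεC
      rw [hgdef] at hcontra
      simp only at hcontra
      rw [inner_sub_right, real_inner_smul_right, real_inner_smul_right, ← h0,
        hp0q, mul_zero, zero_sub] at hcontra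
      have hsinpos : 0 < Real.sin ε := Real.sin_pos_of_pos_of_lt_pi hε0 hε1
      nlinarith
    · exact h0
  refine ⟨‖p0‖⁻¹ • p0, ?_, ?_⟩
  · rw [norm_smul, norm_inv, norm_norm, inv_mul_cancel₀ hp0norm.ne']
  · intro x hx
    rw [real_inner_smul_left]
    exact mul_pos (by positivity) (hp0pos x hx)

end sep

/-- A maximal open w-convex proper subset of the round `n`-sphere meets every great 2-sphere
(the intersection of the sphere with a 3-dimensional linear subspace) in a set contained in an
open hemisphere of that great 2-sphere. -/
theorem stmt_6 (n : ℕ) (hn : 2 ≤ n)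
    (C : Set (EuclideanSpace ℝ (Fin (n + 1))))
    (hsub : C ⊆ Metric.sphere 0 1)
    (hopen : IsOpenInSphere C)
    (hconv : WConvex C)
    (hproper : C ≠ Metric.sphere 0 1)
    (hmax : ∀ C' : Set (EuclideanSpace ℝ (Fin (n + 1))),
      C' ⊆ Metric.sphere 0 1 → IsOpenInSphere C' → WConvex C' →
      C' ≠ Metric.sphere 0 1 → C ⊆ C' → C' = C)
    (V : Submodule ℝ (EuclideanSpace ℝ (Fin (n + 1))))
    (hV : Module.finrank ℝ V = 3) :
    ∃ z, z ∈ Metric.sphere (0 : EuclideanSpace ℝ (Fin (n + 1))) 1 ∧ z ∈ V ∧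
      ∀ x ∈ C, x ∈ V → ⟪z, x⟫_ℝ < 0 := by
  have hVne : V ≠ ⊥ := by
    intro h
    rw [h, finrank_bot] at hV
    norm_num at hV
  obtain ⟨v0, hv0V, hv0ne⟩ := (Submodule.ne_bot_iff V).1 hVne
  have hv0norm : ‖v0‖ ≠ 0 := norm_ne_zero_iff.2 hv0ne
  by_cases hCne : C.Nonempty
  · obtain ⟨p, hp1, hppos⟩ := exists_hemi_superset hsub hopen hconv hproper hCne
    set q : EuclideanSpace ℝ (Fin (n + 1)) := V.starProjection p with hqdef
    have hqV : q ∈ V := V.starProjection_apply_mem p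
    have hinner_eq : ∀ x ∈ V, ⟪q, x⟫_ℝ = ⟪p, x⟫_ℝ := by
      intro x hxV
      have h := Submodule.starProjection_inner_eq_zero (K := V) p x hxV
      rw [inner_sub_left] at h
      rw [← hqdef] at h
      linarith
    by_cases hq0 : q = 0
    · refine ⟨‖v0‖⁻¹ • v0, ?_, Submodule.smul_mem V _ hv0V, ?_⟩
      · rw [mem_sphere_zero_iff_norm, norm_smul, norm_inv, norm_norm,
          inv_mul_cancel₀ hv0norm]
      · intro x hxC hxV
        exfalso
        have h1 := hppos x hxC
        have h2 := hinner_eq x hxV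
        rw [hq0, inner_zero_left] at h2
        linarith
    · have hqnorm : 0 < ‖q‖ := norm_pos_iff.2 hq0
      refine ⟨-(‖q‖⁻¹ • q), ?_, Submodule.neg_mem V (Submodule.smul_mem V _ hqV), ?_⟩
      · rw [mem_sphere_zero_iff_norm, norm_neg, norm_smul, norm_inv, norm_norm,
          inv_mul_cancel₀ hqnorm.ne']
      · intro x hxC hxV
        rw [inner_neg_left, real_inner_smul_left, neg_lt, neg_zero]
        have h1 := hppos x hxC
        have h2 := hinner_eq x hxV
        have : 0 < ⟪q, x⟫_ℝ := by linarith
        positivity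
  · refine ⟨‖v0‖⁻¹ • v0, ?_, Submodule.smul_mem V _ hv0V, ?_⟩
    · rw [mem_sphere_zero_iff_norm, norm_smul, norm_inv, norm_norm, inv_mul_cancel₀ hv0norm]
    · intro x hxC _
      exact absurd ⟨x, hxC⟩ hCne
end
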